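/- Let k > 0 and R > 0, and let r, θ : ℝ → ℝ be differentiable functions with r(t) > 0 for all t, satisfying the system r′(t) = cosh(kR)·sin(θ(t)), θ′(t) = k·sinh(kR)/sinh(k·r(t))², with initial conditions r(0) = R and θ(0) = 0. Then cos(θ(t)) = tanh(kR)·(cosh(k·r(t))/sinh(k·r(t))) for all t ∈ ℝ. -/

import Mathlib

/-- The conserved quantity `cos θ(t) = tanh(kR) · coth(k r(t))` for the ODE system
defining the hypersurface `S_R` in a rotationally symmetric Hadamard manifold. -/
theorem stmt_4 (k R : ℝ) (hk : 0 < k) (hR : 0 < R)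
    (r θ : ℝ → ℝ) (hr : Differentiable ℝ r) (hθ : Differentiable ℝ θ)
    (hrpos : ∀ t : ℝ, 0 < r t)
    (hr' : ∀ t : ℝ, deriv r t = Real.cosh (k * R) * Real.sin (θ t))
    (hθ' : ∀ t : ℝ, deriv θ t = k * Real.sinh (k * R) / (Real.sinh (k * r t)) ^ 2)
    (hr0 : r 0 = R) (hθ0 : θ 0 = 0) :
    ∀ t : ℝ, Real.cos (θ t)
      = Real.tanh (k * R) * (Real.cosh (k * r t) / Real.sinh (k * r t)) := by
  set f : ℝ → ℝ := fun t =>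
    Real.cos (θ t) - Real.tanh (k * R) * (Real.cosh (k * r t) / Real.sinh (k * r t)) with hf
  have hsinh_pos : ∀ t, 0 < Real.sinh (k * r t) := fun t =>
    Real.sinh_pos_iff.mpr (mul_pos hk (hrpos t))
  have hF : ∀ t, HasDerivAt f 0 t := by
    intro t
    have hsne := (hsinh_pos t).ne'
    have hu : HasDerivAt (fun t => k * r t)
        (k * (Real.cosh (k * R) * Real.sin (θ t))) t := by
      have := ((hr t).hasDerivAt).const_mul k
      rwa [hr' t] at this
    have hc : HasDerivAt (fun t => Real.cosh (k * r t))
        (Real.sinh (k * r t) * (k * (Real.cosh (k * R) * Real.sin (θ t)))) t := hu.cosh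
    have hs : HasDerivAt (fun t => Real.sinh (k * r t))
        (Real.cosh (k * r t) * (k * (Real.cosh (k * R) * Real.sin (θ t)))) t := hu.sinh
    have hdiv := hc.div hs hsne
    have hcos : HasDerivAt (fun t => Real.cos (θ t))
        (-Real.sin (θ t) * (k * Real.sinh (k * R) / (Real.sinh (k * r t)) ^ 2)) t := by
      have := ((hθ t).hasDerivAt).cos
      rwa [hθ' t] at this
    have htot := hcos.sub (hdiv.const_mul (Real.tanh (k * R)))
    convert htot using 1
    · rfl
    · rfl
    · rfl
    have hkey : Real.sinh (k * r t) ^ 2 - Real.cosh (k * r t) ^ 2 = -1 := by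
      have := Real.cosh_sq_sub_sinh_sq (k * r t); linarith
    have htanh : Real.tanh (k * R) * Real.cosh (k * R) = Real.sinh (k * R) := by
      rw [Real.tanh_eq_sinh_div_cosh]
      field_simp
    rw [eq_comm, ← mul_div_assoc, ← mul_div_assoc, ← sub_div, div_eq_zero_iff]
    left
    linear_combination (-(Real.sin (θ t) * k * Real.tanh (k * R) * Real.cosh (k * R))) * hkey + (Real.sin (θ t) * k) * htanh
  have hconst : ∀ t, f t = f 0 := by
    intro t
    exact is_const_of_deriv_eq_zero (fun x => (hF x).differentiableAt)
      (fun x => (hF x).deriv) t 0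
  have hf0 : f 0 = 0 := by
    have hsne : Real.sinh (k * R) ≠ 0 := by
      have := hsinh_pos 0; rw [hr0] at this; exact this.ne'
    simp only [hf, hθ0, hr0, Real.cos_zero, Real.tanh_eq_sinh_div_cosh]
    field_simp
    norm_num
  intro t
  have := hconst t
  rw [hf0] at this
  have : f t = 0 := this
  simpa [hf, sub_eq_zero] using this
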